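/- Let I be a finite set of real numbers (exponents) and let 0 < l ≤ m. For each i ∈ I let a_i ∈ ℝ with |a_i| ≤ f_i for some f_i ≥ 0, and suppose a ∈ ℝ satisfies a ≥ Σ_{i∈I} |i|·f_i·max(l^{i-1}, m^{i-1}). Then the function h(y) = Σ_{i∈I} a_i·y^{i} - a·y is monotone nonincreasing on the interval [l,m]. -/

import Mathlib

open Finset

lemma rpow_le_max_aux {l m y s : ℝ} (hl : 0 < l) (h1 : l ≤ y) (h2 : y ≤ m) :
    y ^ s ≤ max (l ^ s) (m ^ s) := by
  rcases le_or_gt 0 s with hs | hs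
  · exact le_max_of_le_right (Real.rpow_le_rpow (hl.trans_le h1).le h2 hs)
  · exact le_max_of_le_left (Real.rpow_le_rpow_of_nonpos hl h1 hs.le)

/-- Shifted nonlinearity is nonincreasing: if `|a i| ≤ f i` for the exponents `i ∈ I`
and the shift `a₀` dominates `Σ |i| f i max(l^(i-1), m^(i-1))`, then
`y ↦ Σ aᵢ y^i - a₀ y` is antitone on `[l, m]` (`0 < l ≤ m`). -/
theorem shifted_nonlinearity_antitone (I : Finset ℝ) (l m : ℝ) (hl : 0 < l)
    (hlm : l ≤ m) (a f : ℝ → ℝ) (hf : ∀ i ∈ I, 0 ≤ f i) (haf : ∀ i ∈ I, |a i| ≤ f i)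
    (a₀ : ℝ) (ha₀ : ∑ i ∈ I, |i| * f i * max (l ^ (i - 1)) (m ^ (i - 1)) ≤ a₀) :
    AntitoneOn (fun y : ℝ => (∑ i ∈ I, a i * y ^ i) - a₀ * y) (Set.Icc l m) := by
  have hD : ∀ y ∈ Set.Icc l m,
      HasDerivAt (fun y : ℝ => (∑ i ∈ I, a i * y ^ i) - a₀ * y)
        ((∑ i ∈ I, a i * (i * y ^ (i - 1))) - a₀) y := by
    intro y hy
    have hy0 : 0 < y := hl.trans_le hy.1
    have h1 : HasDerivAt (fun y : ℝ => ∑ i ∈ I, a i * y ^ i)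
        (∑ i ∈ I, a i * (i * y ^ (i - 1))) y := by
      refine HasDerivAt.fun_sum fun i _ => ?_
      simpa [mul_comm, mul_assoc, mul_left_comm] using
        (Real.hasDerivAt_rpow_const (p := i) (Or.inl hy0.ne')).const_mul (a i)
    simpa using h1.fun_sub ((hasDerivAt_id y).const_mul a₀)
  have hderiv : ∀ y ∈ Set.Icc l m,
      (∑ i ∈ I, a i * (i * y ^ (i - 1))) - a₀ ≤ 0 := by
    intro y hy
    have hsum : (∑ i ∈ I, a i * (i * y ^ (i - 1))) ≤
        ∑ i ∈ I, |i| * f i * max (l ^ (i - 1)) (m ^ (i - 1)) := by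
      refine Finset.sum_le_sum fun i hi => ?_
      have hy0 : 0 < y := hl.trans_le hy.1
      have hyp : (0:ℝ) ≤ y ^ (i - 1) := Real.rpow_nonneg hy0.le _
      have h1 : a i * (i * y ^ (i - 1)) ≤ |a i| * |i| * y ^ (i - 1) := by
        calc a i * (i * y ^ (i - 1)) ≤ |a i * (i * y ^ (i - 1))| := le_abs_self _
          _ = |a i| * |i| * y ^ (i - 1) := by
              rw [abs_mul, abs_mul, abs_of_nonneg hyp, mul_assoc]
      refine h1.trans ?_
      have h2 : y ^ (i - 1) ≤ max (l ^ (i - 1)) (m ^ (i - 1)) :=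
        rpow_le_max_aux hl hy.1 hy.2
      have h3 : |a i| * |i| ≤ |i| * f i := by
        rw [mul_comm]
        exact mul_le_mul_of_nonneg_left (haf i hi) (abs_nonneg _)
      exact mul_le_mul h3 h2 hyp (mul_nonneg (abs_nonneg _) (hf i hi))
    linarith
  refine antitoneOn_of_deriv_nonpos (convex_Icc l m)
    (fun y hy => (hD y hy).continuousAt.continuousWithinAt)
    (fun y hy => ((hD y (interior_subset hy)).differentiableAt.differentiableWithinAt)) ?_
  intro y hy
  rw [(hD y (interior_subset hy)).deriv]
  exact hderiv y (interior_subset hy)
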